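/- For every nonsingular M-matrix L, there exists a positive diagonal matrix G = diag(g_1, ..., g_N) such that G·L + L^T·G is positive definite. -/

import Mathlib

open Matrix Filter
open scoped NNReal ENNReal Topology

attribute [local instance] Matrix.linftyOpNormedAddCommGroup Matrix.linftyOpNormedRing
  Matrix.linftyOpNormedAlgebra Matrix.linftyOpNormedSpace Matrix.linftyOpIsBoundedSMul

variable {N : ℕ}

noncomputable instance : CompleteSpace (Matrix (Fin N) (Fin N) ℂ) :=
  inferInstance

lemma entry_norm_le (M : Matrix (Fin N) (Fin N) ℂ) (i j : Fin N) : ‖M i j‖ ≤ ‖M‖ := by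
  rw [Matrix.linfty_opNorm_def]
  have h1 : ‖M i j‖ ≤ ∑ j', ‖M i j'‖ :=
    Finset.single_le_sum (fun _ _ => norm_nonneg _) (Finset.mem_univ j)
  have h2 : ∑ j', ‖M i j'‖ = ((∑ j', ‖M i j'‖₊ : ℝ≥0) : ℝ) := by push_cast; rfl
  have h3 : (∑ j', ‖M i j'‖₊ : ℝ≥0) ≤ Finset.univ.sup fun i => ∑ j', ‖M i j'‖₊ :=
    Finset.le_sup (f := fun i => ∑ j', ‖M i j'‖₊) (Finset.mem_univ i)
  calc ‖M i j‖ ≤ ∑ j', ‖M i j'‖ := h1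
    _ ≤ _ := by rw [h2]; exact_mod_cast h3

noncomputable def entryCLM (i j : Fin N) : Matrix (Fin N) (Fin N) ℂ →L[ℂ] ℂ :=
  LinearMap.mkContinuous
    { toFun := fun M => M i j, map_add' := fun _ _ => rfl, map_smul' := fun _ _ => rfl } 1
    (fun M => by rw [one_mul]; exact entry_norm_le M i j)

lemma gelfand_bound (a : Matrix (Fin N) (Fin N) ℂ) (r : ℝ≥0)
    (h : spectralRadius ℂ a < (r : ℝ≥0∞)) :
    ∃ k₀ : ℕ, ∀ k ≥ k₀, ‖a ^ k‖ ≤ (r : ℝ) ^ k := by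
  have hg := spectrum.pow_nnnorm_pow_one_div_tendsto_nhds_spectralRadius a
  have hev : ∀ᶠ k : ℕ in atTop, (‖a ^ k‖₊ : ℝ≥0∞) ^ (1 / (k : ℝ)) < (r : ℝ≥0∞) :=
    hg.eventually_lt_const h
  obtain ⟨k₀, hk₀⟩ := eventually_atTop.mp hev
  refine ⟨max k₀ 1, fun k hk => ?_⟩
  have hk1 : (1 : ℕ) ≤ k := le_trans (le_max_right _ _) hk
  have hkpos : (0 : ℝ) < (k : ℝ) := by positivity
  have h2 : ((‖a ^ k‖₊ : ℝ≥0∞) ^ (1 / (k : ℝ))) ^ (k : ℝ) < (r : ℝ≥0∞) ^ (k : ℝ) :=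
    ENNReal.rpow_lt_rpow (hk₀ k (le_trans (le_max_left _ _) hk)) hkpos
  rw [← ENNReal.rpow_mul, one_div, inv_mul_cancel₀ (ne_of_gt hkpos), ENNReal.rpow_one] at h2
  have h3 : (‖a ^ k‖₊ : ℝ≥0∞) < ((r ^ k : ℝ≥0) : ℝ≥0∞) := by
    rwa [ENNReal.coe_pow, ← ENNReal.rpow_natCast (r : ℝ≥0∞) k]
  have h4 : ‖a ^ k‖₊ < r ^ k := by exact_mod_cast h3
  exact_mod_cast h4.le

lemma neumann (B : Matrix (Fin N) (Fin N) ℝ) (z : ℂ)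
    (hz : spectralRadius ℂ (B.map Complex.ofReal) < ENNReal.ofReal ‖z‖) :
    ∃ S : Matrix (Fin N) (Fin N) ℂ,
      (z • 1 - B.map Complex.ofReal) * S = 1 ∧
      S * (z • 1 - B.map Complex.ofReal) = 1 ∧
      (∀ i j, HasSum (fun k : ℕ => z⁻¹ ^ (k+1) * ((B.map Complex.ofReal ^ k) i j)) (S i j)) ∧
      Summable (fun k : ℕ => ‖z‖⁻¹ ^ (k+1) * ‖(B.map Complex.ofReal) ^ k‖) := by
  set Bc := B.map Complex.ofReal with hBc
  have hz0 : 0 < ‖z‖ := ENNReal.ofReal_pos.mp (lt_of_le_of_lt zero_le hz)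
  have hzne : z ≠ 0 := by simpa using norm_pos_iff.mp hz0
  obtain ⟨r, hr1, hr2⟩ := ENNReal.lt_iff_exists_nnreal_btwn.mp hz
  have hrz : (r : ℝ) < ‖z‖ := by
    rw [ENNReal.ofReal_eq_coe_nnreal hz0.le, ENNReal.coe_lt_coe] at hr2
    exact_mod_cast hr2
  obtain ⟨k₀, hk₀⟩ := gelfand_bound Bc r hr1
  set q : ℝ := (r : ℝ) * ‖z‖⁻¹ with hq
  have hq0 : 0 ≤ q := by positivity
  have hq1 : q < 1 := by
    rw [hq, ← div_eq_mul_inv, div_lt_one hz0]; exact hrz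
  have hgeo : Summable (fun k : ℕ => ‖z‖⁻¹ * q ^ k) :=
    (summable_geometric_of_lt_one hq0 hq1).mul_left _
  have hbound : ∀ k ≥ k₀, ‖z‖⁻¹ ^ (k+1) * ‖Bc ^ k‖ ≤ ‖z‖⁻¹ * q ^ k := by
    intro k hk
    have h1 : ‖Bc ^ k‖ ≤ (r:ℝ) ^ k := hk₀ k hk
    calc ‖z‖⁻¹ ^ (k+1) * ‖Bc ^ k‖ ≤ ‖z‖⁻¹ ^ (k+1) * (r:ℝ) ^ k := by
          apply mul_le_mul_of_nonneg_left h1 (by positivity)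
      _ = ‖z‖⁻¹ * q ^ k := by rw [hq, mul_pow, pow_succ']; ring
  have hnormsum : Summable (fun k : ℕ => ‖z‖⁻¹ ^ (k+1) * ‖Bc ^ k‖) := by
    apply Summable.of_norm_bounded_eventually_nat hgeo
    filter_upwards [eventually_ge_atTop k₀] with k hk
    rw [Real.norm_eq_abs, abs_of_nonneg (by positivity)]
    exact hbound k hk
  have hfs : Summable (fun k : ℕ => ‖z⁻¹ ^ (k+1) • Bc ^ k‖) := by
    convert hnormsum using 2 with k
    rw [norm_smul, norm_pow, norm_inv]
  have hsummable : Summable (fun k : ℕ => z⁻¹ ^ (k+1) • Bc ^ k) := hfs.of_norm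
  set S := ∑' k : ℕ, z⁻¹ ^ (k+1) • Bc ^ k with hS
  have htend0 : Tendsto (fun k : ℕ => z⁻¹ ^ k • Bc ^ k) atTop (𝓝 0) := by
    refine squeeze_zero_norm' ?_ (tendsto_pow_atTop_nhds_zero_of_lt_one hq0 hq1)
    filter_upwards [eventually_ge_atTop k₀] with k hk
    rw [norm_smul, norm_pow, norm_inv]
    calc ‖z‖⁻¹ ^ k * ‖Bc ^ k‖ ≤ ‖z‖⁻¹ ^ k * (r:ℝ) ^ k :=
          mul_le_mul_of_nonneg_left (hk₀ k hk) (by positivity)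
        _ = q ^ k := by rw [hq, mul_pow]; ring
  have hterm_left : ∀ k : ℕ, (z • 1 - Bc) * (z⁻¹ ^ (k+1) • Bc ^ k)
      = z⁻¹ ^ k • Bc ^ k - z⁻¹ ^ (k+1) • Bc ^ (k+1) := by
    intro k
    have hzz : z * z⁻¹ ^ (k+1) = z⁻¹ ^ k := by
      rw [pow_succ]; field_simp
    have h1 : (z • (1 : Matrix (Fin N) (Fin N) ℂ)) * (z⁻¹ ^ (k+1) • Bc ^ k)
        = z⁻¹ ^ k • Bc ^ k := by
      rw [smul_mul_assoc, one_mul, smul_smul, hzz]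
    have h2 : Bc * (z⁻¹ ^ (k+1) • Bc ^ k) = z⁻¹ ^ (k+1) • Bc ^ (k+1) := by
      rw [mul_smul_comm, ← pow_succ']
    rw [sub_mul, h1, h2]
  have hterm_right : ∀ k : ℕ, (z⁻¹ ^ (k+1) • Bc ^ k) * (z • 1 - Bc)
      = z⁻¹ ^ k • Bc ^ k - z⁻¹ ^ (k+1) • Bc ^ (k+1) := by
    intro k
    have hzz : z⁻¹ ^ (k+1) * z = z⁻¹ ^ k := by
      rw [pow_succ]; field_simp
    have h1 : (z⁻¹ ^ (k+1) • Bc ^ k) * (z • (1 : Matrix (Fin N) (Fin N) ℂ))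
        = z⁻¹ ^ k • Bc ^ k := by
      rw [smul_mul_assoc, mul_smul_comm, mul_one, smul_smul, hzz]
    have h2 : (z⁻¹ ^ (k+1) • Bc ^ k) * Bc = z⁻¹ ^ (k+1) • Bc ^ (k+1) := by
      rw [smul_mul_assoc, ← pow_succ]
    rw [mul_sub, h1, h2]
  have htel : HasSum (fun k : ℕ => z⁻¹ ^ k • Bc ^ k - z⁻¹ ^ (k+1) • Bc ^ (k+1))
      (1 : Matrix (Fin N) (Fin N) ℂ) := by
    have hsn : Summable (fun k : ℕ =>
        ‖z⁻¹ ^ k • Bc ^ k - z⁻¹ ^ (k+1) • Bc ^ (k+1)‖) := by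
      apply Summable.of_norm_bounded (hfs.mul_left ‖z • 1 - Bc‖)
      intro k
      rw [norm_norm, ← hterm_left k]
      exact norm_mul_le _ _
    refine (hasSum_iff_tendsto_nat_of_summable_norm hsn).mpr ?_
    have hps : ∀ n : ℕ, ∑ k ∈ Finset.range n,
        (z⁻¹ ^ k • Bc ^ k - z⁻¹ ^ (k+1) • Bc ^ (k+1))
        = 1 - z⁻¹ ^ n • Bc ^ n := by
      intro n
      rw [Finset.sum_range_sub' (fun k => z⁻¹ ^ k • Bc ^ k) n]
      simp
    simp_rw [hps]
    have h := (tendsto_const_nhds (x := (1 : Matrix (Fin N) (Fin N) ℂ))).sub htend0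
    rw [sub_zero] at h
    exact h
  refine ⟨S, ?_, ?_, ?_, hnormsum⟩
  · rw [hS, ← Summable.tsum_mul_left _ hsummable]
    simp_rw [hterm_left]
    exact htel.tsum_eq
  · rw [hS, ← Summable.tsum_mul_right _ hsummable]
    simp_rw [hterm_right]
    exact htel.tsum_eq
  · intro i j
    have h := (hsummable.hasSum).mapL (entryCLM i j)
    have he : ∀ k : ℕ, entryCLM i j (z⁻¹ ^ (k+1) • Bc ^ k) = z⁻¹ ^ (k+1) * (Bc ^ k) i j :=
      fun k => rfl
    rw [show (fun k : ℕ => z⁻¹ ^ (k+1) * ((Bc ^ k) i j))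
        = fun k => entryCLM i j (z⁻¹ ^ (k+1) • Bc ^ k) from funext fun k => (he k).symm]
    exact h

lemma norm_le_of_entries (M : Matrix (Fin N) (Fin N) ℂ) (c : ℝ) (hc : 0 ≤ c)
    (h : ∀ i j, ‖M i j‖ ≤ c) : ‖M‖ ≤ N * c := by
  rw [Matrix.linfty_opNorm_def]
  have hNc : (0:ℝ) ≤ N * c := by positivity
  have key : ∀ i : Fin N, ((∑ j, ‖M i j‖₊ : ℝ≥0) : ℝ) ≤ N * c := by
    intro i
    have : ∑ j, ‖M i j‖ ≤ N * c := by
      calc ∑ j, ‖M i j‖ ≤ ∑ _j : Fin N, c := Finset.sum_le_sum fun j _ => h i j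
        _ = N * c := by simp [Finset.sum_const, Finset.card_univ]
    calc ((∑ j, ‖M i j‖₊ : ℝ≥0) : ℝ) = ∑ j, ‖M i j‖ := by push_cast; rfl
      _ ≤ N * c := this
  have : (Finset.univ.sup fun i : Fin N => ∑ j, ‖M i j‖₊) ≤ ⟨N * c, hNc⟩ := by
    apply Finset.sup_le
    intro i _
    exact NNReal.coe_le_coe.mp (key i)
  exact_mod_cast this

set_option maxHeartbeats 1000000 in
lemma semipos (L : Matrix (Fin N) (Fin N) ℝ)
    (hoff : ∀ i j, i ≠ j → L i j ≤ 0)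
    (heig : ∀ μ : ℂ, (∃ v : Fin N → ℂ, v ≠ 0 ∧ (L.map Complex.ofReal) *ᵥ v = μ • v) →
      0 < μ.re) :
    ∃ x : Fin N → ℝ, (∀ i, 0 < x i) ∧ ∀ i, (L *ᵥ x) i = 1 := by
  rcases Nat.eq_zero_or_pos N with hN | hN
  · exact ⟨fun _ => 1, fun i => absurd (hN ▸ i.2 : (i:ℕ) < 0) (Nat.not_lt_zero _),
      fun i => absurd (hN ▸ i.2 : (i:ℕ) < 0) (Nat.not_lt_zero _)⟩
  haveI hne : Nonempty (Fin N) := ⟨⟨0, hN⟩⟩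
  haveI : Nontrivial (Matrix (Fin N) (Fin N) ℂ) := by
    refine ⟨0, 1, fun hcon => ?_⟩
    have := congrFun (congrFun hcon ⟨0, hN⟩) ⟨0, hN⟩
    simp [Matrix.one_apply] at this
  set s : ℝ := 1 + ∑ i, |L i i| with hs
  have habs : (0:ℝ) ≤ ∑ i, |L i i| := Finset.sum_nonneg fun i _ => abs_nonneg _
  have hs0 : 0 < s := by rw [hs]; linarith
  have hsd : ∀ i, L i i < s := by
    intro i
    have h1 : L i i ≤ |L i i| := le_abs_self _
    have h2 : |L i i| ≤ ∑ j, |L j j| :=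
      Finset.single_le_sum (f := fun j => |L j j|) (fun j _ => abs_nonneg _) (Finset.mem_univ i)
    rw [hs]; linarith
  set B : Matrix (Fin N) (Fin N) ℝ := s • (1 : Matrix (Fin N) (Fin N) ℝ) - L with hB
  have hBnn : ∀ i j, 0 ≤ B i j := by
    intro i j
    rw [hB]
    by_cases h : i = j
    · subst h
      simp only [Matrix.sub_apply, Matrix.smul_apply, Matrix.one_apply_eq, smul_eq_mul, mul_one]
      linarith [hsd i]
    · simp only [Matrix.sub_apply, Matrix.smul_apply, Matrix.one_apply_ne h, smul_eq_mul,
        mul_zero, zero_sub, neg_nonneg]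
      exact hoff i j h
  have hBknn : ∀ (k : ℕ) (i j : Fin N), 0 ≤ (B ^ k) i j := by
    intro k
    induction k with
    | zero => intro i j; rw [pow_zero, Matrix.one_apply]; split <;> norm_num
    | succ k ih =>
      intro i j
      rw [pow_succ, Matrix.mul_apply]
      exact Finset.sum_nonneg fun l _ => mul_nonneg (ih i l) (hBnn l j)
  set Bc := B.map Complex.ofReal with hBc
  have hmap : ∀ k : ℕ, Bc ^ k = (B ^ k).map Complex.ofReal := by
    intro k
    have h : ∀ M : Matrix (Fin N) (Fin N) ℝ, M.map Complex.ofReal = (algebraMap ℝ ℂ).mapMatrix M :=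
      fun M => rfl
    rw [hBc, h, h, ← map_pow]
  have hLc : L.map Complex.ofReal = (s : ℂ) • 1 - Bc := by
    ext i j
    by_cases h : i = j <;>
      simp [hBc, hB, Matrix.map_apply, Matrix.sub_apply, Matrix.smul_apply, Matrix.one_apply, h]
  have hspec : ∀ μ ∈ spectrum ℂ Bc, μ.re < s := by
    intro μ hμ
    rw [spectrum.mem_iff, Algebra.algebraMap_eq_smul_one] at hμ
    have hdet : (μ • (1 : Matrix (Fin N) (Fin N) ℂ) - Bc).det = 0 := by
      by_contra h
      exact hμ ((Matrix.isUnit_iff_isUnit_det _).mpr (isUnit_iff_ne_zero.mpr h))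
    obtain ⟨v, hv0, hveq⟩ := (Matrix.exists_mulVec_eq_zero_iff).mpr hdet
    have hBv : Bc *ᵥ v = μ • v := by
      rw [Matrix.sub_mulVec, Matrix.smul_mulVec, Matrix.one_mulVec, sub_eq_zero] at hveq
      exact hveq.symm
    have hAv : (L.map Complex.ofReal) *ᵥ v = ((s:ℂ) - μ) • v := by
      rw [hLc, Matrix.sub_mulVec, Matrix.smul_mulVec, Matrix.one_mulVec, hBv, sub_smul]
    have := heig ((s:ℂ) - μ) ⟨v, hv0, hAv⟩
    simp only [Complex.sub_re, Complex.ofReal_re] at this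
    linarith
  obtain ⟨μ₀, hμ₀mem, hμ₀max⟩ :=
    (spectrum.isCompact (𝕜 := ℂ) Bc).exists_isMaxOn (spectrum.nonempty Bc)
      continuous_norm.continuousOn
  set ρ : ℝ := ‖μ₀‖ with hρ
  have hsr : spectralRadius ℂ Bc = (‖μ₀‖₊ : ℝ≥0∞) := by
    apply le_antisymm
    · refine iSup₂_le fun μ hμ => ?_
      have : ‖μ‖₊ ≤ ‖μ₀‖₊ := by exact_mod_cast hμ₀max hμ
      exact_mod_cast ENNReal.coe_le_coe.mpr this
    · exact le_iSup₂ (f := fun (μ : ℂ) (_ : μ ∈ spectrum ℂ Bc) => (‖μ‖₊ : ℝ≥0∞)) μ₀ hμ₀mem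
  have hkey : ρ < s := by
    by_contra hcon
    push_neg at hcon
    have hρ0 : 0 < ρ := lt_of_lt_of_le hs0 hcon
    have hρc0 : ((ρ:ℝ):ℂ) ≠ 0 := by exact_mod_cast hρ0.ne'
    have hρnot : ((ρ:ℝ):ℂ) ∉ spectrum ℂ Bc := by
      intro hmem
      have := hspec _ hmem
      rw [Complex.ofReal_re] at this
      linarith
    have hρunit : IsUnit (((ρ:ℝ):ℂ) • (1 : Matrix (Fin N) (Fin N) ℂ) - Bc) := by
      rw [← Algebra.algebraMap_eq_smul_one]
      exact spectrum.notMem_iff.mp hρnot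
    set G : ℝ → Matrix (Fin N) (Fin N) ℂ :=
      fun tt => Ring.inverse (((tt:ℝ):ℂ) • (1 : Matrix (Fin N) (Fin N) ℂ) - Bc) with hG
    have hGcont : ContinuousAt G ρ := by
      have h1 : ContinuousAt Ring.inverse (((ρ:ℝ):ℂ) • (1 : Matrix (Fin N) (Fin N) ℂ) - Bc) := by
        have := NormedRing.inverse_continuousAt hρunit.unit
        rwa [IsUnit.unit_spec] at this
      have h2 : Continuous (fun tt : ℝ => ((tt:ℝ):ℂ) • (1 : Matrix (Fin N) (Fin N) ℂ) - Bc) :=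
        (Complex.continuous_ofReal.smul continuous_const).sub continuous_const
      exact ContinuousAt.comp (g := Ring.inverse) h1 h2.continuousAt
    set C : ℝ := ‖G ρ‖ + 1 with hC
    have hC0 : 0 < C := by positivity
    have hgev : ∀ᶠ tt in 𝓝 ρ, ‖G tt‖ ≤ C :=
      (hGcont.norm).eventually_le_const (by rw [hC]; linarith)
    set tq : ℕ → ℝ := fun n => ρ + ((n:ℝ)+1)⁻¹ with htq
    have htt : Tendsto tq atTop (𝓝 ρ) := by
      have h0 : Tendsto (fun n : ℕ => ((n:ℝ)+1)⁻¹) atTop (𝓝 0) := by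
        simpa only [one_div] using tendsto_one_div_add_atTop_nhds_zero_nat (𝕜 := ℝ)
      simpa using tendsto_const_nhds.add h0
    have htρ : ∀ n, ρ < tq n := fun n => lt_add_of_pos_right _ (by positivity)
    set K : ℝ := ‖(1 : Matrix (Fin N) (Fin N) ℂ)‖ with hK
    have hK0 : 0 < K := norm_pos_iff.mpr one_ne_zero
    set C₂ : ℝ := N * C + 1 with hC₂
    have hC₂0 : 0 < C₂ := by positivity
    have hclose : ∀ᶠ n : ℕ in atTop, (tq n - ρ) * K < C₂⁻¹ := by
      have h1 : Tendsto (fun n => (tq n - ρ) * K) atTop (𝓝 0) := by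
        simpa using (htt.sub (tendsto_const_nhds (x := ρ))).mul_const K
      exact h1.eventually_lt_const (by positivity)
    obtain ⟨n, hn1, hn2⟩ := ((htt.eventually hgev).and hclose).exists
    have htqpos : 0 < tq n := lt_trans hρ0 (htρ n)
    have hsp_t : spectralRadius ℂ Bc < ENNReal.ofReal ‖((tq n : ℝ):ℂ)‖ := by
      rw [hsr, Complex.norm_real, Real.norm_eq_abs, abs_of_pos htqpos,
        ENNReal.lt_ofReal_iff_toReal_lt ENNReal.coe_ne_top]
      simpa using htρ n
    obtain ⟨St, ht1, ht2, htent, htnorms⟩ := neumann B ((tq n : ℝ):ℂ) hsp_t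
    have hGt : G (tq n) = St := by
      calc G (tq n)
          = Ring.inverse ((((⟨_, St, ht1, ht2⟩ : (Matrix (Fin N) (Fin N) ℂ)ˣ)) :
              Matrix (Fin N) (Fin N) ℂ)) := rfl
        _ = St := Ring.inverse_unit _
    set z' : ℂ := ((tq n : ℝ):ℂ) * (μ₀ / ((ρ:ℝ):ℂ)) with hz'
    have hμ₀ρ : ‖μ₀ / ((ρ:ℝ):ℂ)‖ = 1 := by
      rw [norm_div, Complex.norm_real, Real.norm_eq_abs, abs_of_pos hρ0]
      rw [div_eq_one_iff_eq hρ0.ne']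
    have hz'norm : ‖z'‖ = tq n := by
      rw [hz', norm_mul, hμ₀ρ, Complex.norm_real, Real.norm_eq_abs, abs_of_pos htqpos, mul_one]
    have hsp_z : spectralRadius ℂ Bc < ENNReal.ofReal ‖z'‖ := by
      rw [hsr, hz'norm, ENNReal.lt_ofReal_iff_toReal_lt ENNReal.coe_ne_top]
      simpa using htρ n
    obtain ⟨Sz, hz1, hz2, hzent, hznorms⟩ := neumann B z' hsp_z
    simp only [Complex.norm_real, Real.norm_eq_abs, abs_of_pos htqpos] at htnorms
    have hentry : ∀ i j, ‖Sz i j‖ ≤ C := by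
      intro i j
      set b : ℕ → ℝ := fun k => (tq n)⁻¹ ^ (k+1) * (B ^ k) i j with hb
      have hbnn : ∀ k, 0 ≤ b k := fun k => by
        have := hBknn k i j
        rw [hb]; positivity
      have hBentry : ∀ k : ℕ, (B ^ k) i j ≤ ‖Bc ^ k‖ := by
        intro k
        have h2 : ‖(Bc ^ k) i j‖ = (B ^ k) i j := by
          rw [hmap k, Matrix.map_apply, Complex.norm_real, Real.norm_eq_abs,
            abs_of_nonneg (hBknn k i j)]
        rw [← h2]
        exact entry_norm_le _ i j
      have hbsum : Summable b := by
        refine Summable.of_nonneg_of_le hbnn (fun k => ?_) htnorms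
        exact mul_le_mul_of_nonneg_left (hBentry k) (by positivity)
      have hnormeq : ∀ k : ℕ, ‖z'⁻¹ ^ (k+1) * (Bc ^ k) i j‖ = b k := by
        intro k
        rw [norm_mul, norm_pow, norm_inv, hz'norm, hmap k, Matrix.map_apply,
          Complex.norm_real, Real.norm_eq_abs, abs_of_nonneg (hBknn k i j)]
      have h1 : ‖Sz i j‖ ≤ ∑' k, b k := by
        rw [← (hzent i j).tsum_eq]
        have hsn : Summable fun k : ℕ => ‖z'⁻¹ ^ (k+1) * (Bc ^ k) i j‖ := by
          simpa only [hnormeq] using hbsum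
        calc ‖∑' k : ℕ, z'⁻¹ ^ (k+1) * (Bc ^ k) i j‖
            ≤ ∑' k : ℕ, ‖z'⁻¹ ^ (k+1) * (Bc ^ k) i j‖ := norm_tsum_le_tsum_norm hsn
          _ = ∑' k, b k := by simp_rw [hnormeq]
      have h2 : ∑' k, b k = (St i j).re := by
        have h := htent i j
        have heq2 : (fun k : ℕ => ((tq n : ℝ):ℂ)⁻¹ ^ (k+1) * ((Bc ^ k) i j))
            = fun k : ℕ => ((b k : ℝ) : ℂ) := by
          funext k
          rw [hmap k, hb]
          simp [Matrix.map_apply]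
        rw [heq2] at h
        have hre := Complex.hasSum_re h
        simp only [Complex.ofReal_re] at hre
        exact hre.tsum_eq
      have h3 : (St i j).re ≤ ‖St‖ := by
        refine le_trans (Complex.re_le_norm _) ?_
        exact entry_norm_le St i j
      have h4 : ‖St‖ ≤ C := hGt ▸ hn1
      rw [h2] at h1
      linarith
    have hSznorm : ‖Sz‖ ≤ N * C := norm_le_of_entries Sz C hC0.le hentry
    have hSzpos : 0 < ‖Sz‖ := by
      rw [norm_pos_iff]
      intro h0
      rw [h0, zero_mul] at hz2
      exact one_ne_zero hz2.symm
    set u : (Matrix (Fin N) (Fin N) ℂ)ˣ := ⟨z' • 1 - Bc, Sz, hz1, hz2⟩ with hu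
    have hdiff : ((μ₀ : ℂ) • 1 - Bc) - (z' • 1 - Bc)
        = (μ₀ - z') • (1 : Matrix (Fin N) (Fin N) ℂ) := by
      rw [sub_sub_sub_cancel_right, ← sub_smul]
    have hμz : ‖μ₀ - z'‖ = tq n - ρ := by
      have hrepr : μ₀ - z' = ((ρ - tq n : ℝ):ℂ) * (μ₀ / ((ρ:ℝ):ℂ)) := by
        rw [hz']
        push_cast
        field_simp
      rw [hrepr, norm_mul, hμ₀ρ, mul_one, Complex.norm_real, Real.norm_eq_abs, abs_of_neg
        (by linarith [htρ n] : ρ - tq n < 0), neg_sub]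
    have hdiffnorm : ‖((μ₀ : ℂ) • 1 - Bc) - ↑u‖ < ‖(↑u⁻¹ : Matrix (Fin N) (Fin N) ℂ)‖⁻¹ := by
      have hval : (↑u : Matrix (Fin N) (Fin N) ℂ) = z' • 1 - Bc := rfl
      have hinv : (↑u⁻¹ : Matrix (Fin N) (Fin N) ℂ) = Sz := rfl
      rw [hval, hinv]
      calc ‖((μ₀ : ℂ) • 1 - Bc) - (z' • 1 - Bc)‖ = ‖μ₀ - z'‖ * K := by
            rw [hdiff, norm_smul, hK]
        _ = (tq n - ρ) * K := by rw [hμz]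
        _ < C₂⁻¹ := hn2
        _ ≤ ‖Sz‖⁻¹ := by
            apply inv_anti₀ hSzpos
            rw [hC₂]; linarith
    have hμunit : IsUnit ((μ₀ : ℂ) • 1 - Bc) := by
      have h := (u.ofNearby _ hdiffnorm).isUnit
      simpa using h
    rw [spectrum.mem_iff, Algebra.algebraMap_eq_smul_one] at hμ₀mem
    exact hμ₀mem hμunit
  -- construction of x
  have hsltz : spectralRadius ℂ Bc < ENNReal.ofReal ‖((s:ℝ):ℂ)‖ := by
    rw [hsr]
    have h1 : ‖((s:ℝ):ℂ)‖ = s := by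
      rw [Complex.norm_real, Real.norm_eq_abs, abs_of_pos hs0]
    rw [h1, ENNReal.lt_ofReal_iff_toReal_lt ENNReal.coe_ne_top]
    simpa using hkey
  obtain ⟨S, heq1, heq2, hent, hnorms⟩ := neumann B ((s:ℝ):ℂ) hsltz
  have hSent : ∀ i j, HasSum (fun k : ℕ => s⁻¹ ^ (k+1) * (B ^ k) i j) ((S i j).re) := by
    intro i j
    have h := hent i j
    have heq : (fun k : ℕ => ((s:ℝ):ℂ)⁻¹ ^ (k+1) * ((Bc ^ k) i j))
        = fun k : ℕ => ((s⁻¹ ^ (k+1) * (B ^ k) i j : ℝ) : ℂ) := by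
      funext k
      rw [hmap k]
      simp [Matrix.map_apply]
    rw [heq] at h
    simpa only [Complex.ofReal_re] using Complex.hasSum_re h
  set x : Fin N → ℝ := fun i => ∑ j, (S i j).re with hx
  have hSnn : ∀ i j, 0 ≤ (S i j).re := by
    intro i j
    rw [← (hSent i j).tsum_eq]
    apply tsum_nonneg
    intro k
    have := hBknn k i j
    positivity
  have hSdiag : ∀ i, s⁻¹ ≤ (S i i).re := by
    intro i
    rw [← (hSent i i).tsum_eq]
    have h0 : s⁻¹ ^ (0+1) * (B ^ 0) i i = s⁻¹ := by simp [Matrix.one_apply_eq]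
    calc s⁻¹ = s⁻¹ ^ (0+1) * (B ^ 0) i i := h0.symm
      _ ≤ _ := Summable.le_tsum (hSent i i).summable 0 fun k _ => by
          have := hBknn k i i; positivity
  have hxpos : ∀ i, 0 < x i := by
    intro i
    apply Finset.sum_pos' (fun j _ => hSnn i j)
    exact ⟨i, Finset.mem_univ i, lt_of_lt_of_le (inv_pos.mpr hs0) (hSdiag i)⟩
  refine ⟨x, hxpos, ?_⟩
  intro i
  have hLcS : (L.map Complex.ofReal) * S = 1 := by rw [hLc]; exact heq1
  calc (L *ᵥ x) i = ∑ j, L i j * ∑ j', (S j j').re := by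
        rw [Matrix.mulVec, dotProduct]
    _ = ∑ j, ∑ j', L i j * (S j j').re := by
        apply Finset.sum_congr rfl; intro j _; rw [Finset.mul_sum]
    _ = ∑ j', ∑ j, L i j * (S j j').re := Finset.sum_comm
    _ = ∑ j', ((∑ j, ((L i j : ℂ)) * S j j').re) := by
        apply Finset.sum_congr rfl; intro j' _
        rw [Complex.re_sum]
        exact Finset.sum_congr rfl fun j _ => (Complex.re_ofReal_mul _ _).symm
    _ = ∑ j', (((L.map Complex.ofReal) * S) i j').re := by
        apply Finset.sum_congr rfl; intro j' _
        rw [Matrix.mul_apply]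
        rfl
    _ = ∑ j', ((1 : Matrix (Fin N) (Fin N) ℂ) i j').re := by rw [hLcS]
    _ = 1 := by
        rw [Finset.sum_eq_single i]
        · simp [Matrix.one_apply_eq]
        · intro j _ hji; simp [Matrix.one_apply_ne (Ne.symm hji)]
        · intro h; exact absurd (Finset.mem_univ i) h

lemma quad_pos (R : Matrix (Fin N) (Fin N) ℝ) (hsymm : ∀ i j, R i j = R j i)
    (hoffd : ∀ i j, i ≠ j → R i j ≤ 0) (hrow : ∀ i, 0 < ∑ j, R i j)
    (u : Fin N → ℝ) (hu : u ≠ 0) : 0 < ∑ i, ∑ j, R i j * u i * u j := by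
  have h1 : ∑ i, ∑ j, R i j * u j ^ 2 = ∑ i, ∑ j, R i j * u i ^ 2 := by
    rw [Finset.sum_comm]
    exact Finset.sum_congr rfl fun i _ => Finset.sum_congr rfl fun j _ => by rw [hsymm]
  have hD : ∑ i, ∑ j, R i j * (u i - u j) ^ 2 ≤ 0 := by
    apply Finset.sum_nonpos; intro i _
    apply Finset.sum_nonpos; intro j _
    by_cases h : i = j
    · subst h; simp
    · exact mul_nonpos_iff.mpr (Or.inr ⟨hoffd i j h, sq_nonneg _⟩)
  have hT1 : 0 < ∑ i, ∑ j, R i j * u i ^ 2 := by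
    have hrw : ∑ i, ∑ j, R i j * u i ^ 2 = ∑ i, (∑ j, R i j) * u i ^ 2 :=
      Finset.sum_congr rfl fun i _ => (Finset.sum_mul _ _ _).symm
    rw [hrw]
    obtain ⟨i₀, hi₀⟩ := Function.ne_iff.mp hu
    apply Finset.sum_pos' (fun i _ => mul_nonneg (hrow i).le (sq_nonneg _))
    refine ⟨i₀, Finset.mem_univ _, mul_pos (hrow i₀) ?_⟩
    exact lt_of_le_of_ne (sq_nonneg _) (Ne.symm (pow_ne_zero 2 hi₀))
  have hkey : 2 * (∑ i, ∑ j, R i j * u i * u j)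
      = 2 * (∑ i, ∑ j, R i j * u i ^ 2) - ∑ i, ∑ j, R i j * (u i - u j) ^ 2 := by
    have expand : ∀ i j, 2 * (R i j * u i * u j)
        = R i j * u i ^ 2 + R i j * u j ^ 2 - R i j * (u i - u j) ^ 2 := by intros; ring
    calc 2 * (∑ i, ∑ j, R i j * u i * u j) = ∑ i, ∑ j, 2 * (R i j * u i * u j) := by
          rw [Finset.mul_sum]
          exact Finset.sum_congr rfl fun i _ => Finset.mul_sum _ _ _
      _ = ∑ i, ∑ j, (R i j * u i ^ 2 + R i j * u j ^ 2 - R i j * (u i - u j) ^ 2) :=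
          Finset.sum_congr rfl fun i _ => Finset.sum_congr rfl fun j _ => expand i j
      _ = ((∑ i, ∑ j, R i j * u i ^ 2) + ∑ i, ∑ j, R i j * u j ^ 2)
            - ∑ i, ∑ j, R i j * (u i - u j) ^ 2 := by
          simp only [Finset.sum_sub_distrib, Finset.sum_add_distrib]
      _ = 2 * (∑ i, ∑ j, R i j * u i ^ 2) - ∑ i, ∑ j, R i j * (u i - u j) ^ 2 := by
          rw [h1]; ring
  linarith

theorem M_matrix_diagonal_lyapunov' (L : Matrix (Fin N) (Fin N) ℝ)
    (hoff : ∀ i j, i ≠ j → L i j ≤ 0)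
    (heig : ∀ μ : ℂ, (∃ v : Fin N → ℂ, v ≠ 0 ∧ (L.map Complex.ofReal) *ᵥ v = μ • v) →
      0 < μ.re) :
    ∃ g : Fin N → ℝ, (∀ i, 0 < g i) ∧
      (Matrix.diagonal g * L + Lᵀ * Matrix.diagonal g).PosDef := by
  obtain ⟨x, hx, hLx⟩ := semipos L hoff heig
  have hoffT : ∀ i j, i ≠ j → Lᵀ i j ≤ 0 := fun i j h => hoff j i (Ne.symm h)
  have heigT : ∀ μ : ℂ,
      (∃ v : Fin N → ℂ, v ≠ 0 ∧ ((Lᵀ).map Complex.ofReal) *ᵥ v = μ • v) → 0 < μ.re := by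
    rintro μ ⟨v, hv0, hveq⟩
    set A := L.map Complex.ofReal with hA
    have hAT : (Lᵀ).map Complex.ofReal = Aᵀ := Matrix.transpose_map
    rw [hAT] at hveq
    have hdetT : (Aᵀ - μ • 1).det = 0 := by
      apply Matrix.exists_mulVec_eq_zero_iff.mp
      exact ⟨v, hv0, by
        rw [Matrix.sub_mulVec, hveq, Matrix.smul_mulVec, Matrix.one_mulVec, sub_self]⟩
    have hdet : (A - μ • 1).det = 0 := by
      have htr : (A - μ • 1)ᵀ = Aᵀ - μ • 1 := by
        rw [Matrix.transpose_sub, Matrix.transpose_smul, Matrix.transpose_one]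
      rw [← Matrix.det_transpose, htr, hdetT]
    obtain ⟨w, hw0, hweq⟩ := Matrix.exists_mulVec_eq_zero_iff.mpr hdet
    refine heig μ ⟨w, hw0, ?_⟩
    rw [Matrix.sub_mulVec, Matrix.smul_mulVec, Matrix.one_mulVec, sub_eq_zero] at hweq
    exact hweq
  obtain ⟨y, hy, hLy⟩ := semipos Lᵀ hoffT heigT
  set g : Fin N → ℝ := fun i => y i / x i with hg
  have hgpos : ∀ i, 0 < g i := fun i => div_pos (hy i) (hx i)
  have hM : ∀ i j, (Matrix.diagonal g * L + Lᵀ * Matrix.diagonal g) i j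
      = g i * L i j + L j i * g j := by
    intro i j
    rw [Matrix.add_apply, Matrix.diagonal_mul, Matrix.mul_diagonal]
    rfl
  refine ⟨g, hgpos, Matrix.posDef_iff_dotProduct_mulVec.mpr ⟨?_, ?_⟩⟩
  · ext i j
    rw [Matrix.conjTranspose_apply, star_trivial, hM, hM]
    ring
  · intro z hz
    have hstar : star z = z := by funext i; simp
    rw [hstar]
    set R : Matrix (Fin N) (Fin N) ℝ :=
      Matrix.of fun i j => y i * L i j * x j + y j * L j i * x i with hR
    have hRapp : ∀ i j, R i j = y i * L i j * x j + y j * L j i * x i := fun i j => rfl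
    set u : Fin N → ℝ := fun i => z i / x i with hu
    have hq : dotProduct z ((Matrix.diagonal g * L + Lᵀ * Matrix.diagonal g) *ᵥ z)
        = ∑ i, ∑ j, R i j * u i * u j := by
      rw [dotProduct]
      calc ∑ i, z i * ((Matrix.diagonal g * L + Lᵀ * Matrix.diagonal g) *ᵥ z) i
          = ∑ i, z i * ∑ j, (g i * L i j + L j i * g j) * z j := by
            apply Finset.sum_congr rfl; intro i _
            congr 1
            rw [Matrix.mulVec, dotProduct]
            exact Finset.sum_congr rfl fun j _ => by rw [hM]
        _ = ∑ i, ∑ j, R i j * u i * u j := by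
            apply Finset.sum_congr rfl; intro i _
            rw [Finset.mul_sum]
            apply Finset.sum_congr rfl; intro j _
            rw [hRapp, hu, hg]
            have hxi := (hx i).ne'
            have hxj := (hx j).ne'
            field_simp
    rw [hq]
    apply quad_pos R (fun i j => by rw [hRapp, hRapp]; ring) ?_ ?_ u ?_
    · intro i j hij
      rw [hRapp]
      have h1 : y i * L i j * x j ≤ 0 :=
        mul_nonpos_iff.mpr (Or.inr ⟨mul_nonpos_iff.mpr (Or.inl ⟨(hy i).le, hoff i j hij⟩),
          (hx j).le⟩)
      have h2 : y j * L j i * x i ≤ 0 :=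
        mul_nonpos_iff.mpr (Or.inr ⟨mul_nonpos_iff.mpr (Or.inl ⟨(hy j).le, hoff j i
          (Ne.symm hij)⟩), (hx i).le⟩)
      linarith
    · intro i
      have hsum : ∑ j, R i j = y i * (L *ᵥ x) i + x i * (Lᵀ *ᵥ y) i := by
        rw [Matrix.mulVec, Matrix.mulVec, dotProduct, dotProduct,
          Finset.mul_sum, Finset.mul_sum, ← Finset.sum_add_distrib]
        apply Finset.sum_congr rfl; intro j _
        rw [hRapp, Matrix.transpose_apply]
        ring
      rw [hsum, hLx i, hLy i]
      have := hx i; have := hy i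
      linarith
    · obtain ⟨i₀, hi₀⟩ := Function.ne_iff.mp hz
      exact Function.ne_iff.mpr ⟨i₀, by
        simp only [hu, Pi.zero_apply]
        exact div_ne_zero hi₀ (hx i₀).ne'⟩

/-- For every nonsingular M-matrix L there exists a positive diagonal G with
    G L + Lᵀ G positive definite. -/
theorem M_matrix_diagonal_lyapunov (N : ℕ) (L : Matrix (Fin N) (Fin N) ℝ)
    (hoff : ∀ i j, i ≠ j → L i j ≤ 0)
    (heig : ∀ μ : ℂ, (∃ v : Fin N → ℂ, v ≠ 0 ∧ (L.map Complex.ofReal) *ᵥ v = μ • v) →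
      0 < μ.re) :
    ∃ g : Fin N → ℝ, (∀ i, 0 < g i) ∧
      (Matrix.diagonal g * L + Lᵀ * Matrix.diagonal g).PosDef := by
  exact M_matrix_diagonal_lyapunov' L hoff heig
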